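/- Let A > B > 0, Δ = A - B, and ā, b̄ > 0. For every t > 0, the function p ↦ h(p,t) = -p²·Δ/t + p·(Δ - ā(1 + B/t) - b̄(1 + A/t))/t + b̄(1 + A/t)/t has exactly one root p*_t in (0,1), h(p,t) > 0 for 0 ≤ p < p*_t, and h(p,t) < 0 for p*_t < p ≤ 1. Moreover p*_t → p* as t → ∞, where p* = (Δ - ā - b̄ + √((Δ - ā - b̄)² + 4Δb̄))/(2Δ). -/

import Mathlib

open Filter

/-- For `ā, b̄ > 0` the drift `p ↦ h(p,t)` has exactly one root `p*_t` in `(0,1)`,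
is positive to its left and negative to its right on `[0,1]`, and `p*_t → p*` as
`t → ∞`, with `p* = (Δ - ā - b̄ + √((Δ - ā - b̄)² + 4Δb̄))/(2Δ)`. -/
theorem stmt_8 (A B abar bbar : ℝ) (hB : 0 < B) (hAB : B < A)
    (ha : 0 < abar) (hb : 0 < bbar) :
    let Δ : ℝ := A - B
    let h : ℝ → ℝ → ℝ := fun p t =>
      -p ^ 2 * Δ / t + p * (Δ - abar * (1 + B / t) - bbar * (1 + A / t)) / t +
        bbar * (1 + A / t) / t
    let pstar : ℝ := (Δ - abar - bbar + Real.sqrt ((Δ - abar - bbar) ^ 2 + 4 * Δ * bbar)) / (2 * Δ)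
    ∃ proot : ℝ → ℝ,
      (∀ t > (0:ℝ),
        proot t ∈ Set.Ioo (0:ℝ) 1 ∧ h (proot t) t = 0 ∧
        (∀ p, 0 ≤ p → p < proot t → 0 < h p t) ∧
        (∀ p, proot t < p → p ≤ 1 → h p t < 0) ∧
        (∀ p ∈ Set.Ioo (0:ℝ) 1, h p t = 0 → p = proot t)) ∧
      Tendsto proot atTop (nhds pstar) := by
  intro Δ h pstar
  have hΔ : 0 < Δ := sub_pos.mpr hAB
  have hA : 0 < A := hB.trans hAB
  set c : ℝ → ℝ := fun t => Δ - abar * (1 + B / t) - bbar * (1 + A / t) with hcdef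
  set d : ℝ → ℝ := fun t => bbar * (1 + A / t) with hddef
  set s : ℝ → ℝ := fun t => Real.sqrt ((c t) ^ 2 + 4 * Δ * d t) with hsdef
  refine ⟨fun t => (c t + s t) / (2 * Δ), ?_, ?_⟩
  · intro t ht
    dsimp only
    have htne : t ≠ 0 := ne_of_gt ht
    have hAt : 0 < 1 + A / t := by positivity
    have hBt : 0 < 1 + B / t := by positivity
    have hdt : 0 < d t := by simp only [hddef]; positivity
    have hnn : 0 ≤ (c t) ^ 2 + 4 * Δ * d t := by positivity
    have hs2 : (s t) ^ 2 = (c t) ^ 2 + 4 * Δ * d t := Real.sq_sqrt hnn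
    have hs0 : 0 ≤ s t := Real.sqrt_nonneg _
    have hΔd : 0 < Δ * d t := mul_pos hΔ hdt
    have hsc : c t < s t := by nlinarith
    have hsc' : -c t < s t := by nlinarith
    have hcd : c t + d t < Δ := by
      simp only [hcdef, hddef]; nlinarith [mul_pos ha hBt]
    have hform : ∀ p : ℝ, h p t = (-(Δ * p ^ 2) + c t * p + d t) / t := by
      intro p
      simp only [h, hcdef, hddef]
      field_simp
    have key : ∀ p : ℝ,
        -(Δ * p ^ 2) + c t * p + d t
          = (s t + c t - 2 * Δ * p) * (s t - c t + 2 * Δ * p) / (4 * Δ) := by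
      intro p
      rw [eq_div_iff (by positivity : (4:ℝ) * Δ ≠ 0)]
      nlinarith [hs2]
    have hr1 : (c t + s t) / (2 * Δ) < 1 := by
      rw [div_lt_one (by positivity)]
      nlinarith
    have hr0 : 0 < (c t + s t) / (2 * Δ) := div_pos (by linarith) (by positivity)
    refine ⟨⟨hr0, hr1⟩, ?_, ?_, ?_, ?_⟩
    · rw [hform, key]
      have h1 : s t + c t - 2 * Δ * ((c t + s t) / (2 * Δ)) = 0 := by
        field_simp
        ring
      rw [h1, zero_mul, zero_div, zero_div]
    · intro p hp0 hp
      have hp' : p * (2 * Δ) < c t + s t := (lt_div_iff₀ (by positivity)).mp hp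
      have f1 : 0 < s t + c t - 2 * Δ * p := by linarith
      have f2 : 0 < s t - c t + 2 * Δ * p := by
        have := mul_nonneg hΔ.le hp0; linarith
      rw [hform, key]
      exact div_pos (div_pos (mul_pos f1 f2) (by positivity)) ht
    · intro p hp hp1
      have hp' : c t + s t < p * (2 * Δ) := (div_lt_iff₀ (by positivity)).mp hp
      have f1 : s t + c t - 2 * Δ * p < 0 := by linarith
      have f2 : 0 < s t - c t + 2 * Δ * p := by
        have hp0 : 0 < p := hr0.trans hp
        have := mul_pos hΔ hp0; linarith
      rw [hform, key]
      exact div_neg_of_neg_of_pos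
        (div_neg_of_neg_of_pos (mul_neg_of_neg_of_pos f1 f2) (by positivity)) ht
    · rintro p ⟨hp0, hp1⟩ heq
      rw [hform, key] at heq
      have f2 : 0 < s t - c t + 2 * Δ * p := by
        have := mul_pos hΔ hp0; linarith
      rw [div_eq_zero_iff, div_eq_zero_iff] at heq
      rcases heq with (heq | h4) | h0
      · rcases mul_eq_zero.mp heq with hf1 | hf2
        · rw [eq_div_iff (by positivity : (2:ℝ) * Δ ≠ 0)]
          linarith
        · linarith
      · exact absurd h4 (by positivity)
      · exact absurd h0 htne
  · have hB0 : Tendsto (fun t : ℝ => B / t) atTop (nhds 0) :=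
      tendsto_const_nhds.div_atTop tendsto_id
    have hA0 : Tendsto (fun t : ℝ => A / t) atTop (nhds 0) :=
      tendsto_const_nhds.div_atTop tendsto_id
    have hc : Tendsto c atTop (nhds (Δ - abar - bbar)) := by
      have : Tendsto (fun t : ℝ => Δ - abar * (1 + B / t) - bbar * (1 + A / t)) atTop
          (nhds (Δ - abar * (1 + 0) - bbar * (1 + 0))) :=
        (tendsto_const_nhds.sub ((tendsto_const_nhds.add hB0).const_mul abar)).sub
          ((tendsto_const_nhds.add hA0).const_mul bbar)
      simpa [hcdef] using this
    have hd : Tendsto d atTop (nhds bbar) := by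
      have : Tendsto (fun t : ℝ => bbar * (1 + A / t)) atTop (nhds (bbar * (1 + 0))) :=
        (tendsto_const_nhds.add hA0).const_mul bbar
      simpa [hddef] using this
    have hs : Tendsto s atTop
        (nhds (Real.sqrt ((Δ - abar - bbar) ^ 2 + 4 * Δ * bbar))) := by
      have : Tendsto (fun t => (c t) ^ 2 + 4 * Δ * d t) atTop
          (nhds ((Δ - abar - bbar) ^ 2 + 4 * Δ * bbar)) :=
        (hc.pow 2).add (hd.const_mul (4 * Δ))
      simpa [hsdef] using this.sqrt
    simpa [pstar] using (hc.add hs).div_const (2 * Δ)
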